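/- For every positive integer t, the two-variable generating function ∑_{n≥1}∑_{m≥0} g_t(m,n) z^m q^n specializes at z = 0 to (1/(1−q^t))·(1/(q;q)_t − 1), recovering the Breuer–Kronholm generating function for partitions with largest minus smallest part at most t. -/

import Mathlib

open Multiset PowerSeries

namespace BKproof

/-- parts positive, nonempty, sum n, max - min ≤ t -/
def GP (t n : ℕ) (l : Multiset ℕ) : Prop :=
  (∀ p ∈ l, 0 < p) ∧ l ≠ 0 ∧ l.sum = n ∧ l.sup - sInf {p | p ∈ l} ≤ t

/-- parts positive, sum n, parts ≤ t -/
def BP (t n : ℕ) (l : Multiset ℕ) : Prop :=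
  (∀ p ∈ l, 0 < p) ∧ l.sum = n ∧ ∀ p ∈ l, p ≤ t

noncomputable def gcount (t n : ℕ) : ℕ := Nat.card {l : Multiset ℕ // GP t n l}
noncomputable def bcount (t n : ℕ) : ℕ := Nat.card {l : Multiset ℕ // BP t n l}

lemma mem_le_sum {s : Multiset ℕ} {a : ℕ} (h : a ∈ s) : a ≤ s.sum := by
  have := Multiset.cons_erase h
  calc a ≤ a + (s.erase a).sum := Nat.le_add_right _ _
  _ = (a ::ₘ s.erase a).sum := (Multiset.sum_cons _ _).symm
  _ = s.sum := by rw [this]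

lemma sup_mem {s : Multiset ℕ} (h : s ≠ 0) : s.sup ∈ s := by
  induction s using Multiset.induction with
  | empty => exact absurd rfl h
  | cons a s ih =>
    rw [Multiset.sup_cons]
    rcases eq_or_ne s 0 with rfl | hs
    · simp
    · rcases le_total a s.sup with h1 | h1
      · rw [sup_eq_right.mpr h1]; exact Multiset.mem_cons_of_mem (ih hs)
      · rw [sup_eq_left.mpr h1]; exact Multiset.mem_cons_self _ _

lemma minp_mem {s : Multiset ℕ} (h : s ≠ 0) : sInf {p | p ∈ s} ∈ s := by
  obtain ⟨a, ha⟩ := Multiset.exists_mem_of_ne_zero h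
  exact Nat.sInf_mem (⟨a, ha⟩ : Set.Nonempty {p | p ∈ s})

lemma minp_le {s : Multiset ℕ} {a : ℕ} (h : a ∈ s) : sInf {p | p ∈ s} ≤ a := Nat.sInf_le h

lemma finiteP {n : ℕ} {P : Multiset ℕ → Prop}
    (h : ∀ l, P l → l.sum = n ∧ ∀ p ∈ l, 0 < p) : Finite {l : Multiset ℕ // P l} := by
  have hinj : Function.Injective
      (fun l : {l : Multiset ℕ // P l} =>
        (⟨l.1, fun hi => (h l.1 l.2).2 _ hi, (h l.1 l.2).1⟩ : n.Partition)) := by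
    intro a b hab
    exact Subtype.ext (congrArg Nat.Partition.parts hab)
  exact Finite.of_injective _ hinj

lemma card_split (n : ℕ) (P Q : Multiset ℕ → Prop)
    (h : ∀ l, P l → l.sum = n ∧ ∀ p ∈ l, 0 < p) :
    Nat.card {l : Multiset ℕ // P l} =
      Nat.card {l : Multiset ℕ // P l ∧ Q l} + Nat.card {l : Multiset ℕ // P l ∧ ¬ Q l} := by
  classical
  haveI := finiteP h
  haveI := finiteP (P := fun l => P l ∧ Q l) (fun l hl => h l hl.1)
  haveI := finiteP (P := fun l => P l ∧ ¬ Q l) (fun l hl => h l hl.1)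
  rw [← Nat.card_sum]
  refine Nat.card_congr (Equiv.symm ?_)
  exact ((Equiv.subtypeSubtypeEquivSubtypeInter P Q).symm.sumCongr
    (Equiv.subtypeSubtypeEquivSubtypeInter P (fun l => ¬ Q l)).symm).trans
    (Equiv.sumCompl fun x : {l : Multiset ℕ // P l} => Q x.1)

lemma bcount_rec (t n : ℕ) :
    bcount (t + 1) n =
      (if t + 1 ≤ n then bcount (t + 1) (n - (t + 1)) else 0) + bcount t n := by
  have hsplit := card_split n (BP (t + 1) n) (fun l => (t + 1) ∈ l)
    (fun l hl => ⟨hl.2.1, hl.1⟩)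
  rw [bcount, hsplit]
  congr 1
  · -- multisets containing a part t+1
    by_cases htn : t + 1 ≤ n
    · rw [if_pos htn]
      refine Nat.card_congr ⟨fun l => ⟨l.1.erase (t + 1), ?_, ?_, ?_⟩,
        fun l => ⟨(t + 1) ::ₘ l.1, ⟨?_, ?_, ?_⟩, Multiset.mem_cons_self _ _⟩, ?_, ?_⟩
      · exact fun p hp => l.2.1.1 p (Multiset.mem_of_mem_erase hp)
      · have := Multiset.cons_erase l.2.2
        have hs : (t + 1) + (l.1.erase (t + 1)).sum = n := by
          rw [← Multiset.sum_cons, this, l.2.1.2.1]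
        omega
      · exact fun p hp => l.2.1.2.2 p (Multiset.mem_of_mem_erase hp)
      · rintro p hp
        rcases Multiset.mem_cons.mp hp with rfl | hp
        · omega
        · exact l.2.1 p hp
      · rw [Multiset.sum_cons, l.2.2.1]; omega
      · rintro p hp
        rcases Multiset.mem_cons.mp hp with rfl | hp
        · exact le_refl _
        · exact l.2.2.2 p hp
      · intro l
        exact Subtype.ext (Multiset.cons_erase l.2.2)
      · intro l
        exact Subtype.ext (Multiset.erase_cons_head _ _)
    · rw [if_neg htn]
      have : IsEmpty {l : Multiset ℕ // BP (t + 1) n l ∧ (t + 1) ∈ l} := by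
        refine ⟨fun l => htn ?_⟩
        have := mem_le_sum l.2.2
        rw [l.2.1.2.1] at this
        exact this
      exact Nat.card_of_isEmpty
  · -- multisets not containing t+1 are exactly those with parts ≤ t
    refine Nat.card_congr (Equiv.subtypeEquivRight fun l => ?_)
    constructor
    · rintro ⟨⟨h1, h2, h3⟩, h4⟩
      refine ⟨h1, h2, fun p hp => ?_⟩
      have := h3 p hp
      have : p ≠ t + 1 := fun h => h4 (h ▸ hp)
      omega
    · rintro ⟨h1, h2, h3⟩
      refine ⟨⟨h1, h2, fun p hp => le_trans (h3 p hp) (Nat.le_succ t)⟩, fun hc => ?_⟩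
      have := h3 _ hc
      omega

lemma bcount_zero_left (n : ℕ) : bcount 0 n = if n = 0 then 1 else 0 := by
  by_cases hn : n = 0
  · subst hn
    rw [if_pos rfl]
    rw [bcount, Nat.card_eq_one_iff_unique]
    constructor
    · refine ⟨fun a b => ?_⟩
      have ha : a.1 = 0 := by
        by_contra h
        obtain ⟨p, hp⟩ := Multiset.exists_mem_of_ne_zero h
        have := a.2.1 p hp
        have := mem_le_sum hp
        rw [a.2.2.1] at this
        omega
      have hb : b.1 = 0 := by
        by_contra h
        obtain ⟨p, hp⟩ := Multiset.exists_mem_of_ne_zero h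
        have := b.2.1 p hp
        have := mem_le_sum hp
        rw [b.2.2.1] at this
        omega
      exact Subtype.ext (ha.trans hb.symm)
    · exact ⟨⟨0, by simp [BP], by simp [BP]⟩⟩
  · rw [if_neg hn]
    have : IsEmpty {l : Multiset ℕ // BP 0 n l} := by
      refine ⟨fun l => hn ?_⟩
      have hl : l.1 = 0 := by
        by_contra h
        obtain ⟨p, hp⟩ := Multiset.exists_mem_of_ne_zero h
        have := l.2.1 p hp
        have := l.2.2.2 p hp
        omega
      rw [← l.2.2.1, hl]; rfl
    exact Nat.card_of_isEmpty

lemma bcount_zero_right (t : ℕ) : bcount t 0 = 1 := by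
  rw [bcount, Nat.card_eq_one_iff_unique]
  constructor
  · refine ⟨fun a b => ?_⟩
    have key : ∀ c : {l : Multiset ℕ // BP t 0 l}, c.1 = 0 := by
      intro c
      by_contra h
      obtain ⟨p, hp⟩ := Multiset.exists_mem_of_ne_zero h
      have := c.2.1 p hp
      have := mem_le_sum hp
      rw [c.2.2.1] at this
      omega
    exact Subtype.ext ((key a).trans (key b).symm)
  · exact ⟨⟨0, by simp [BP]⟩⟩

noncomputable def Fs (t : ℕ) : PowerSeries ℚ := PowerSeries.mk fun n => (bcount t n : ℚ)

lemma prod_mul_Fs (t : ℕ) :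
    (∏ k ∈ Finset.range t, (1 - PowerSeries.X ^ (k + 1) : PowerSeries ℚ)) * Fs t = 1 := by
  induction t with
  | zero =>
    rw [Finset.prod_range_zero, one_mul]
    ext n
    simp [Fs, coeff_mk, bcount_zero_left, coeff_one]
  | succ t ih =>
    have key : Fs (t + 1) = PowerSeries.X ^ (t + 1) * Fs (t + 1) + Fs t := by
      ext n
      rw [_root_.map_add, coeff_X_pow_mul']
      simp only [Fs, coeff_mk]
      rw [bcount_rec t n]
      push_cast
      split_ifs <;> simp
    have step : (1 - PowerSeries.X ^ (t + 1) : PowerSeries ℚ) * Fs (t + 1) = Fs t := by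
      rw [sub_mul, one_mul]
      nth_rewrite 1 [key]
      ring
    rw [Finset.prod_range_succ, mul_assoc, step, ih]

-- gcount recurrence pieces

lemma gcount_zero (t : ℕ) : gcount t 0 = 0 := by
  have : IsEmpty {l : Multiset ℕ // GP t 0 l} := by
    refine ⟨fun l => ?_⟩
    obtain ⟨p, hp⟩ := Multiset.exists_mem_of_ne_zero l.2.2.1
    have := l.2.1 p hp
    have := mem_le_sum hp
    rw [l.2.2.2.1] at this
    omega
  rw [gcount]
  exact Nat.card_of_isEmpty

noncomputable def bigEquiv (t n : ℕ) (ht : 0 < t) (htn : t ≤ n) :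
    {l : Multiset ℕ // GP t n l ∧ t < l.sup} ≃ {l : Multiset ℕ // GP t (n - t) l} where
  toFun l := by
    refine ⟨(l.1.sup - t) ::ₘ l.1.erase l.1.sup, ?_, Multiset.cons_ne_zero, ?_, ?_⟩
    · rintro p hp
      rcases Multiset.mem_cons.mp hp with rfl | hp
      · omega
      · exact l.2.1.1 p (Multiset.mem_of_mem_erase hp)
    · obtain ⟨⟨hpos, hne, hsum, hdiff⟩, hbig⟩ := l.2
      have hM : l.1.sup ∈ l.1 := sup_mem hne
      have hMn : l.1.sup ≤ n := by
        have := mem_le_sum hM; rw [hsum] at this; exact this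
      have he : l.1.sup + (l.1.erase l.1.sup).sum = n := by
        rw [← Multiset.sum_cons, Multiset.cons_erase hM, hsum]
      rw [Multiset.sum_cons]
      omega
    · obtain ⟨⟨hpos, hne, hsum, hdiff⟩, hbig⟩ := l.2
      set M := l.1.sup with hMdef
      set s' := (M - t) ::ₘ l.1.erase M with hs'
      have hm : sInf {p | p ∈ l.1} ∈ l.1 := minp_mem hne
      have hlow : ∀ p ∈ s', M - t ≤ p := by
        rintro p hp
        rcases Multiset.mem_cons.mp hp with rfl | hp
        · exact le_refl _
        · have h1 := minp_le (Multiset.mem_of_mem_erase hp)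
          have h2 := Multiset.le_sup hm
          omega
      have hsup : s'.sup ≤ M := by
        rw [hs', Multiset.sup_cons]
        refine sup_le (by omega) (Multiset.sup_le.mpr fun b hb =>
          Multiset.le_sup (Multiset.mem_of_mem_erase hb))
      have hinf : M - t ≤ sInf {p | p ∈ s'} := hlow _ (minp_mem Multiset.cons_ne_zero)
      omega
  invFun l := by
    refine ⟨(sInf {p | p ∈ l.1} + t) ::ₘ l.1.erase (sInf {p | p ∈ l.1}), ⟨?_, Multiset.cons_ne_zero, ?_, ?_⟩, ?_⟩
    · rintro p hp
      rcases Multiset.mem_cons.mp hp with rfl | hp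
      · omega
      · exact l.2.1 p (Multiset.mem_of_mem_erase hp)
    · obtain ⟨hpos, hne, hsum, hdiff⟩ := l.2
      have hm : sInf {p | p ∈ l.1} ∈ l.1 := minp_mem hne
      have he : sInf {p | p ∈ l.1} + (l.1.erase (sInf {p | p ∈ l.1})).sum = n - t := by
        rw [← Multiset.sum_cons, Multiset.cons_erase hm, hsum]
      rw [Multiset.sum_cons]
      omega
    · obtain ⟨hpos, hne, hsum, hdiff⟩ := l.2
      set m := sInf {p | p ∈ l.1} with hmdef
      set s' := (m + t) ::ₘ l.1.erase m with hs'
      have hm : m ∈ l.1 := minp_mem hne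
      have hsup : s'.sup ≤ m + t := by
        rw [hs', Multiset.sup_cons]
        refine sup_le (le_refl _) (Multiset.sup_le.mpr fun b hb => ?_)
        have h1 := Multiset.le_sup (s := l.1) (Multiset.mem_of_mem_erase hb)
        have h2 := minp_le hm
        omega
      have hlow : ∀ p ∈ s', m ≤ p := by
        rintro p hp
        rcases Multiset.mem_cons.mp hp with rfl | hp
        · omega
        · exact minp_le (Multiset.mem_of_mem_erase hp)
      have hinf : m ≤ sInf {p | p ∈ s'} := hlow _ (minp_mem Multiset.cons_ne_zero)
      omega
    · obtain ⟨hpos, hne, hsum, hdiff⟩ := l.2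
      set m := sInf {p | p ∈ l.1} with hmdef
      have hm : m ∈ l.1 := minp_mem hne
      have hmem : m + t ∈ (m + t) ::ₘ l.1.erase m := Multiset.mem_cons_self _ _
      have := Multiset.le_sup hmem
      have hmpos := hpos m hm
      omega
  left_inv := by
    rintro ⟨l, ⟨hpos, hne, hsum, hdiff⟩, hbig⟩
    apply Subtype.ext
    simp only
    set M := l.sup with hMdef
    have hM : M ∈ l := sup_mem hne
    set s' := (M - t) ::ₘ l.erase M with hs'
    have hm : sInf {p | p ∈ l} ∈ l := minp_mem hne
    have hlow : ∀ p ∈ s', M - t ≤ p := by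
      rintro p hp
      rcases Multiset.mem_cons.mp hp with rfl | hp
      · exact le_refl _
      · have h1 := minp_le (Multiset.mem_of_mem_erase hp)
        have h2 := Multiset.le_sup hm
        omega
    have hminmem : sInf {p | p ∈ s'} ∈ s' := minp_mem Multiset.cons_ne_zero
    have hmin : sInf {p | p ∈ s'} = M - t := by
      have h1 := hlow _ hminmem
      have h2 : M - t ∈ s' := Multiset.mem_cons_self _ _
      have h3 := minp_le h2
      omega
    rw [hmin]
    have : M - t + t = M := by omega
    rw [this, Multiset.erase_cons_head, Multiset.cons_erase hM]
  right_inv := by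
    rintro ⟨l, hpos, hne, hsum, hdiff⟩
    apply Subtype.ext
    simp only
    set m := sInf {p | p ∈ l} with hmdef
    have hm : m ∈ l := minp_mem hne
    set s' := (m + t) ::ₘ l.erase m with hs'
    have hsup : s'.sup = m + t := by
      refine le_antisymm ?_ (Multiset.le_sup (Multiset.mem_cons_self _ _))
      rw [hs', Multiset.sup_cons]
      refine sup_le (le_refl _) (Multiset.sup_le.mpr fun b hb => ?_)
      have h1 := Multiset.le_sup (s := l) (Multiset.mem_of_mem_erase hb)
      have h2 := minp_le hm
      omega
    rw [hsup]
    have : m + t - t = m := by omega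
    rw [this, Multiset.erase_cons_head, Multiset.cons_erase hm]

lemma gcount_rec (t n : ℕ) (ht : 0 < t) (hn : 0 < n) :
    gcount t n = (if t ≤ n then gcount t (n - t) else 0) + bcount t n := by
  have hsplit := card_split n (GP t n) (fun l => t < l.sup)
    (fun l hl => ⟨hl.2.2.1, hl.1⟩)
  rw [gcount, hsplit]
  congr 1
  · by_cases htn : t ≤ n
    · rw [if_pos htn]
      exact Nat.card_congr (bigEquiv t n ht htn)
    · rw [if_neg htn]
      have : IsEmpty {l : Multiset ℕ // GP t n l ∧ t < l.sup} := by
        refine ⟨fun l => ?_⟩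
        obtain ⟨⟨hpos, hne, hsum, hdiff⟩, hbig⟩ := l.2
        have hM := mem_le_sum (sup_mem hne)
        rw [hsum] at hM
        omega
      exact Nat.card_of_isEmpty
  · refine Nat.card_congr (Equiv.subtypeEquivRight fun l => ?_)
    constructor
    · rintro ⟨⟨h1, h2, h3, h4⟩, h5⟩
      exact ⟨h1, h3, fun p hp => le_trans (Multiset.le_sup hp) (by omega)⟩
    · rintro ⟨h1, h2, h3⟩
      have hne : l ≠ 0 := by
        rintro rfl
        rw [Multiset.sum_zero] at h2
        omega
      have hsup : l.sup ≤ t := Multiset.sup_le.mpr h3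
      exact ⟨⟨h1, hne, h2, by omega⟩, by omega⟩

noncomputable def Gs (t : ℕ) : PowerSeries ℚ := PowerSeries.mk fun n => (gcount t n : ℚ)

lemma Gs_eq (t : ℕ) (ht : 0 < t) :
    Gs t = PowerSeries.X ^ t * Gs t + (Fs t - 1) := by
  ext n
  rw [_root_.map_add, _root_.map_sub, coeff_X_pow_mul']
  simp only [Gs, Fs, coeff_mk, coeff_one]
  rcases Nat.eq_zero_or_pos n with rfl | hn
  · rw [gcount_zero, bcount_zero_right]
    have : ¬ t ≤ 0 := by omega
    rw [if_neg this, if_pos rfl]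
    norm_num
  · rw [gcount_rec t n ht hn]
    have : n ≠ 0 := by omega
    rw [if_neg this]
    push_cast
    split_ifs <;> ring

lemma constCoeff_prod (t : ℕ) :
    (PowerSeries.constantCoeff (R := ℚ))
      (∏ k ∈ Finset.range t, (1 - PowerSeries.X ^ (k + 1) : PowerSeries ℚ)) = 1 := by
  rw [map_prod]
  refine Finset.prod_eq_one fun k _ => ?_
  rw [map_sub, map_one, map_pow, PowerSeries.constantCoeff_X]
  simp

lemma constCoeff_one_sub_X_pow (t : ℕ) (ht : 0 < t) :
    (PowerSeries.constantCoeff (R := ℚ)) (1 - PowerSeries.X ^ t) = 1 := by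
  rw [map_sub, map_one, map_pow, PowerSeries.constantCoeff_X]
  rw [zero_pow (by omega)]
  ring

lemma main_series (t : ℕ) (ht : 0 < t) :
    Gs t = (1 - PowerSeries.X ^ t : PowerSeries ℚ)⁻¹ *
      ((∏ k ∈ Finset.range t, (1 - PowerSeries.X ^ (k + 1) : PowerSeries ℚ))⁻¹ - 1) := by
  have hP : Fs t = (∏ k ∈ Finset.range t, (1 - PowerSeries.X ^ (k + 1) : PowerSeries ℚ))⁻¹ :=
    (PowerSeries.eq_inv_iff_mul_eq_one (by rw [constCoeff_prod]; norm_num)).mpr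
      (by rw [mul_comm]; exact prod_mul_Fs t)
  rw [← hP]
  have hstep : (1 - PowerSeries.X ^ t : PowerSeries ℚ) * Gs t = Fs t - 1 := by
    rw [sub_mul, one_mul]
    nth_rewrite 1 [Gs_eq t ht]
    ring
  have hc : (PowerSeries.constantCoeff (R := ℚ)) (1 - PowerSeries.X ^ t) ≠ 0 := by
    rw [constCoeff_one_sub_X_pow t ht]; norm_num
  calc Gs t = ((1 - PowerSeries.X ^ t : PowerSeries ℚ)⁻¹ * (1 - PowerSeries.X ^ t)) * Gs t := by
        rw [PowerSeries.inv_mul_cancel _ hc, one_mul]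
    _ = (1 - PowerSeries.X ^ t : PowerSeries ℚ)⁻¹ * ((1 - PowerSeries.X ^ t) * Gs t) := by ring
    _ = _ := by rw [hstep]

end BKproof

/-- An overpartition: a multiset of parts together with the finite set of
overlined part sizes. -/
abbrev OP : Type := Multiset ℕ × Finset ℕ

/-- Validity: all parts positive, and every overlined size actually occurs as a part
(so at most one part of each size is overlined). -/
def OP.IsValid (π : OP) : Prop := (∀ p ∈ π.1, 0 < p) ∧ ∀ p ∈ π.2, p ∈ π.1

/-- The weight (sum of parts). -/
def OP.wt (π : OP) : ℕ := π.1.sum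

/-- The number of parts. -/
def OP.len (π : OP) : ℕ := Multiset.card π.1

/-- The number of overlined parts. -/
def OP.o (π : OP) : ℕ := π.2.card

/-- The largest part. -/
def OP.maxPart (π : OP) : ℕ := π.1.sup

/-- The smallest part. -/
noncomputable def OP.minPart (π : OP) : ℕ := sInf {p | p ∈ π.1}

/-- The number of parts equal to `t`. -/
def OP.mT (t : ℕ) (π : OP) : ℕ := π.1.count t

/-- Membership in `G_t`: nonempty, valid, largest minus smallest part at most `t`,
and the largest part not overlined when this difference is exactly `t`. -/
def InG (t : ℕ) (π : OP) : Prop :=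
  π.IsValid ∧ π.1 ≠ 0 ∧ π.maxPart - π.minPart ≤ t ∧
    (π.maxPart - π.minPart = t → π.maxPart ∉ π.2)

/-- Membership in `P_t`: nonempty, valid, all parts at most `t`, no part `t` overlined. -/
def InP (t : ℕ) (π : OP) : Prop :=
  π.IsValid ∧ π.1 ≠ 0 ∧ (∀ p ∈ π.1, p ≤ t) ∧ t ∉ π.2

/-- The map `φ`: each part is replaced by its residue mod `t` (deleted if zero,
retaining its overline) together with `⌊part/t⌋` non-overlined copies of `t`. -/
def phi (t : ℕ) (π : OP) : OP :=
  (Multiset.replicate (π.1.map (· / t)).sum t + (π.1.map (· % t)).filter (· ≠ 0),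
   (π.2.image (· % t)).erase 0)

/-- Membership in `B_t`: bipartitions whose first component has all parts equal to `t`
(none overlined) and whose second component is a nonempty overpartition with parts `≤ t`. -/
def InB (t : ℕ) (b : Multiset ℕ × OP) : Prop :=
  (∀ a ∈ b.1, a = t) ∧ b.2.IsValid ∧ b.2.1 ≠ 0 ∧ ∀ p ∈ b.2.1, p ≤ t

/-- The map `ψ`: merge the two components, un-overlining any overlined `t`. -/
def psi (t : ℕ) (b : Multiset ℕ × OP) : OP := (b.1 + b.2.1, b.2.2.erase t)

theorem specialization_z_zero (t : ℕ) (ht : 0 < t) :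
    (PowerSeries.mk fun n =>
        (Nat.card {π : OP // InG t π ∧ π.wt = n ∧ π.o = 0} : ℚ)) =
      (1 - PowerSeries.X ^ t)⁻¹ *
        ((∏ k ∈ Finset.range t, (1 - PowerSeries.X ^ (k + 1) : PowerSeries ℚ))⁻¹ - 1) ∧
    ∀ n : ℕ, Nat.card {π : OP // InG t π ∧ π.wt = n ∧ π.o = 0} =
      Nat.card {lam : Multiset ℕ // (∀ p ∈ lam, 0 < p) ∧ lam ≠ 0 ∧
        lam.sum = n ∧ lam.sup - sInf {p | p ∈ lam} ≤ t} := by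
  have hcard : ∀ n : ℕ,
      Nat.card {π : OP // InG t π ∧ π.wt = n ∧ π.o = 0} = BKproof.gcount t n := by
    intro n
    refine Nat.card_congr ⟨fun π => ⟨π.1.1, ?_⟩, fun l => ⟨(l.1, ∅), ?_⟩, ?_, ?_⟩
    · obtain ⟨⟨⟨hpos, _⟩, hne, hdiff, _⟩, hwt, _⟩ := π.2
      exact ⟨hpos, hne, hwt, hdiff⟩
    · obtain ⟨hpos, hne, hsum, hdiff⟩ := l.2
      exact ⟨⟨⟨hpos, fun p hp => absurd hp (Finset.notMem_empty p)⟩, hne, hdiff,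
        fun _ => Finset.notMem_empty _⟩, hsum, rfl⟩
    · intro π
      refine Subtype.ext (Prod.ext rfl ?_)
      exact (Finset.card_eq_zero.mp π.2.2.2).symm
    · intro l
      rfl
  constructor
  · have hG : (PowerSeries.mk fun n =>
        (Nat.card {π : OP // InG t π ∧ π.wt = n ∧ π.o = 0} : ℚ)) = BKproof.Gs t := by
      ext n
      rw [PowerSeries.coeff_mk, BKproof.Gs, PowerSeries.coeff_mk, hcard n]
    rw [hG]
    exact BKproof.main_series t ht
  · intro n
    exact (hcard n).trans rfl
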